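/- Let N₁ ≤ N₂ be positive integers and let x ∈ I with x ≥ μ. Then P(∃ n with N₁ ≤ n ≤ N₂ such that μ̂_n ≥ x) ≤ exp(−N₁ · kl(x, μ)). -/

import Mathlib

open MeasureTheory Real Set

/-- (Maximal inequality, upper tail.) Let `1 ≤ N₁ ≤ N₂` and `x ∈ I` with
`x ≥ μ`. Then `P(∃ n, N₁ ≤ n ≤ N₂, μ̂ₙ ≥ x) ≤ exp (-N₁ · kl x μ)`. -/
theorem maximal_inequality_upper
    (ρ : Measure ℝ) [SigmaFinite ρ]
    (Θ : Set ℝ) (hΘ : Θ = {θ : ℝ | Integrable (fun x => exp (θ * x)) ρ})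
    (b b' b'' : ℝ → ℝ)
    (hb : ∀ θ ∈ Θ, b θ = log (∫ x, exp (θ * x) ∂ρ))
    (hb' : ∀ θ ∈ interior Θ, HasDerivAt b (b' θ) θ)
    (hb'' : ∀ θ ∈ interior Θ, HasDerivAt b' (b'' θ) θ)
    (hbpos : ∀ θ ∈ interior Θ, 0 < b'' θ)
    (Iset : Set ℝ) (hI : Iset = b' '' (interior Θ))
    (kl : ℝ → ℝ → ℝ)
    (hkl : ∀ θ ∈ interior Θ, ∀ θ' ∈ interior Θ,
      kl (b' θ) (b' θ') = b θ' - b θ - b' θ * (θ' - θ))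
    (θ : ℝ) (hθ : θ ∈ interior Θ)
    (ν : Measure ℝ) (hν : ν = ρ.withDensity (fun x => ENNReal.ofReal (exp (θ * x - b θ))))
    (μ : ℝ) (hμ : μ = b' θ)
    (Ω : Type*) [MeasurableSpace Ω] (P : Measure Ω) [IsProbabilityMeasure P]
    (X : ℕ → Ω → ℝ) (hXmeas : ∀ i, Measurable (X i))
    (hXlaw : ∀ i, Measure.map (X i) P = ν)
    (hXindep : ProbabilityTheory.iIndepFun X P)
    (μhat : ℕ → Ω → ℝ) (hμhat : ∀ s ω, μhat s ω = (∑ i ∈ Finset.range s, X i ω) / s)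
    (N₁ N₂ : ℕ) (hN₁ : 1 ≤ N₁) (hN : N₁ ≤ N₂)
    (x : ℝ) (hx : x ∈ Iset) (hxμ : μ ≤ x) :
    P {ω | ∃ n, N₁ ≤ n ∧ n ≤ N₂ ∧ x ≤ μhat n ω} ≤
      ENNReal.ofReal (exp (-(N₁ : ℝ) * kl x μ)) := by
  classical
  -- obtain the tilted parameter lam with b' lam = x
  rw [hI] at hx
  obtain ⟨lam, hlam, hblamx⟩ := hx
  ----------------------------------------------------------------
  -- PART 1 : analytic facts
  ----------------------------------------------------------------
  have hconvΘ : Convex ℝ Θ := by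
    rw [hΘ]
    intro θ₁ h1 θ₂ h2 a c ha hc hac
    simp only [mem_setOf_eq] at h1 h2 ⊢
    refine ((h1.const_mul a).add (h2.const_mul c)).mono'
      ((Real.continuous_exp.comp (continuous_const.mul continuous_id)).aestronglyMeasurable)
      (Filter.Eventually.of_forall fun y => ?_)
    rw [Real.norm_eq_abs, abs_of_nonneg (exp_pos _).le]
    calc exp ((a • θ₁ + c • θ₂) * y) = exp (a • (θ₁ * y) + c • (θ₂ * y)) := by
          simp only [smul_eq_mul]; ring_nf
      _ ≤ a • exp (θ₁ * y) + c • exp (θ₂ * y) :=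
        convexOn_exp.2 (mem_univ _) (mem_univ _) ha hc hac
      _ = ((fun x => a * exp (θ₁ * x)) + fun x => c * exp (θ₂ * x)) y := by
          simp [smul_eq_mul]
  have hconvI : Convex ℝ (interior Θ) := hconvΘ.interior
  have hmono : StrictMonoOn b' (interior Θ) := by
    refine strictMonoOn_of_deriv_pos hconvI
      (fun t ht => (hb'' t ht).continuousAt.continuousWithinAt) ?_
    intro t ht
    rw [interior_interior] at ht
    rw [(hb'' t ht).deriv]
    exact hbpos t ht
  have hθlam : θ ≤ lam := by
    by_contra h
    push_neg at h
    have := hmono hlam hθ h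
    rw [hblamx, ← hμ] at this
    exact absurd hxμ (not_le.mpr this)
  have hklv : kl x μ = b θ - b lam - x * (θ - lam) := by
    have := hkl lam hlam θ hθ
    rw [hblamx, ← hμ] at this
    exact this
  have hK0 : 0 ≤ kl x μ := by
    rw [hklv]
    have hD : Convex ℝ (interior Θ ∩ Iic lam) := hconvI.inter (convex_Iic lam)
    set h : ℝ → ℝ := fun t => b t - (b lam + x * (t - lam)) with hh
    have hder : ∀ t ∈ interior Θ, HasDerivAt h (b' t - x) t := by
      intro t ht
      have h1 : HasDerivAt (fun t => b lam + x * (t - lam)) (x * 1) t :=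
        (((hasDerivAt_id t).sub_const lam).const_mul x).const_add (b lam)
      have := (hb' t ht).sub h1
      simp only [mul_one] at this
      exact this
    have hanti : AntitoneOn h (interior Θ ∩ Iic lam) := by
      refine antitoneOn_of_deriv_nonpos hD
        (fun t ht => (hder t ht.1).continuousAt.continuousWithinAt)
        (fun t ht => (hder t (interior_subset (s := interior Θ ∩ Iic lam) ht
          |>.1)).differentiableAt.differentiableWithinAt) ?_
      intro t ht
      have ht' := interior_subset (s := interior Θ ∩ Iic lam) ht
      rw [(hder t ht'.1).deriv]
      have : b' t ≤ b' lam := by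
        rcases eq_or_lt_of_le (mem_Iic.mp ht'.2) with h | h
        · rw [h]
        · exact (hmono ht'.1 hlam h).le
      rw [hblamx] at this; linarith
    have := hanti ⟨hθ, hθlam⟩ ⟨hlam, le_refl lam⟩ hθlam
    have hzero : h lam = 0 := by simp [hh]
    rw [hzero] at this
    simp only [hh] at this
    linarith
  have hKδ : kl x μ = (lam - θ) * x - (b lam - b θ) := by rw [hklv]; ring
  have hδ0 : (0:ℝ) ≤ lam - θ := by linarith
  have hθΘ : θ ∈ Θ := interior_subset hθ
  have hlamΘ : lam ∈ Θ := interior_subset hlam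
  have hIntθ : Integrable (fun y => exp (θ * y)) ρ := by rw [hΘ] at hθΘ; exact hθΘ
  have hIntL : Integrable (fun y => exp (lam * y)) ρ := by rw [hΘ] at hlamΘ; exact hlamΘ
  ----------------------------------------------------------------
  -- PART 2 : the tilting factor f and its law
  ----------------------------------------------------------------
  have hρ0 : ρ ≠ 0 := by
    intro h
    have h1 : ν = 0 := by rw [hν, h]; simp
    have h2 : ν univ = 1 := by
      rw [← hXlaw 0, Measure.map_apply (hXmeas 0) MeasurableSet.univ]
      simp
    rw [h1] at h2; simp at h2
  set f : ℝ → ℝ := fun y => exp ((lam - θ) * y - (b lam - b θ)) with hf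
  have hfcont : Continuous f := by fun_prop
  have hfmeas : Measurable f := hfcont.measurable
  have hfρ : Integrable f ν ∧ ∫ y, f y ∂ν = 1 := by
    have hpos : ∀ (t : ℝ), Integrable (fun y => exp (t * y)) ρ →
        0 < ∫ y, exp (t * y) ∂ρ := by
      intro t hInt
      rw [integral_pos_iff_support_of_nonneg (fun y => (exp_pos _).le) hInt]
      have : Function.support (fun y => exp (t * y)) = univ := by
        ext y; simp [Function.mem_support, (exp_pos _).ne']
      rw [this]
      exact MeasureTheory.Measure.measure_univ_pos.mpr hρ0
    have hexplam : ∫ y, exp (lam * y) ∂ρ = exp (b lam) := by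
      rw [hb lam hlamΘ, exp_log (hpos lam hIntL)]
    have hcomb : ∀ y : ℝ, exp ((lam - θ) * y - (b lam - b θ)) * exp (θ * y - b θ)
        = exp (-(b lam - b θ) - b θ) * exp (lam * y) := by
      intro y; rw [← exp_add, ← exp_add]; ring_nf
    have hmeas_dens : Measurable (fun y => ENNReal.ofReal (exp (θ * y - b θ))) := by
      fun_prop
    constructor
    · rw [hν, integrable_withDensity_iff hmeas_dens
        (Filter.Eventually.of_forall fun y => ENNReal.ofReal_lt_top)]
      refine (hIntL.const_mul (exp (-(b lam - b θ) - b θ))).congr ?_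
      refine Filter.Eventually.of_forall fun y => ?_
      simp only [ENNReal.toReal_ofReal (exp_pos _).le, hf]
      exact (hcomb y).symm
    · rw [hν]
      have hd : (fun y => ENNReal.ofReal (exp (θ * y - b θ)))
          = fun y => ((exp (θ * y - b θ)).toNNReal : ENNReal) := rfl
      rw [hd, integral_withDensity_eq_integral_smul (by fun_prop) _]
      have heq : ∀ y : ℝ, (exp (θ * y - b θ)).toNNReal • f y
          = exp (-(b lam - b θ) - b θ) * exp (lam * y) := by
        intro y
        rw [NNReal.smul_def, smul_eq_mul, Real.coe_toNNReal _ (exp_pos _).le, mul_comm]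
        exact hcomb y
      rw [show (fun y => (exp (θ * y - b θ)).toNNReal • f y)
          = fun y => exp (-(b lam - b θ) - b θ) * exp (lam * y) from funext heq]
      rw [integral_const_mul, hexplam, ← exp_add]
      simp
  ----------------------------------------------------------------
  -- PART 3 : the likelihood-ratio variables Y i
  ----------------------------------------------------------------
  set Y : ℕ → Ω → ℝ := fun i ω => f (X i ω) with hY
  have hYmeas : ∀ i, Measurable (Y i) := fun i => hfmeas.comp (hXmeas i)
  have hYpos : ∀ i ω, 0 < Y i ω := fun i ω => exp_pos _
  have hYint : ∀ i, Integrable (Y i) P := by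
    intro i
    have h2 : Integrable f (Measure.map (X i) P) := (hXlaw i).symm ▸ hfρ.1
    exact (integrable_map_measure hfcont.aestronglyMeasurable
      (hXmeas i).aemeasurable).mp h2
  have hYone : ∀ i, ∫ ω, Y i ω ∂P = 1 := by
    intro i
    have h2 : ∫ ω, Y i ω ∂P = ∫ y, f y ∂(Measure.map (X i) P) :=
      (integral_map (hXmeas i).aemeasurable hfcont.aestronglyMeasurable).symm
    rw [h2, hXlaw i, hfρ.2]
  have hYindep : ProbabilityTheory.iIndepFun Y P :=
    hXindep.comp (fun _ => f) (fun _ => hfmeas)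
  -- products of the Y i over any finite index set
  have hprod : ∀ s : Finset ℕ, Integrable (fun ω => ∏ i ∈ s, Y i ω) P ∧
      ∫ ω, ∏ i ∈ s, Y i ω ∂P = 1 := by
    intro s
    induction s using Finset.induction_on with
    | empty => simp
    | @insert i s hi ih =>
        have hIndep : ProbabilityTheory.IndepFun (∏ j ∈ s, Y j) (Y i) P :=
          hYindep.indepFun_finsetProd_of_notMem hYmeas hi
        have hps : (∏ j ∈ s, Y j) = fun ω => ∏ j ∈ s, Y j ω := by
          funext ω; simp [Finset.prod_apply]
        have heq : (fun ω => ∏ j ∈ insert i s, Y j ω) = (∏ j ∈ s, Y j) * Y i := by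
          funext ω
          simp [Finset.prod_insert hi, Finset.prod_apply, mul_comm]
        constructor
        · rw [heq]
          exact hIndep.integrable_mul (hps ▸ ih.1) (hYint i)
        · rw [heq, hIndep.integral_mul_eq_mul_integral (hps ▸ ih.1).aestronglyMeasurable
            (hYint i).aestronglyMeasurable]
          rw [← hps] at ih
          rw [ih.2, hYone i, mul_one]
  ----------------------------------------------------------------
  -- PART 4 : the decomposition events A n
  ----------------------------------------------------------------
  set A : ℕ → Set Ω :=
    fun n => {ω | x ≤ μhat n ω ∧ ∀ m ∈ Finset.Ico N₁ n, μhat m ω < x} with hA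
  have hμm : ∀ n, Measurable (μhat n) := by
    intro n
    have : μhat n = fun ω => (∑ i ∈ Finset.range n, X i ω) / n := funext (hμhat n)
    rw [this]
    exact (Finset.measurable_sum _ fun i _ => hXmeas i).div_const _
  have hAmeas : ∀ n, MeasurableSet (A n) := by
    intro n
    have hAe : A n = {ω | x ≤ μhat n ω} ∩
        ⋂ m ∈ Finset.Ico N₁ n, {ω | μhat m ω < x} := by
      ext ω; simp [hA, mem_iInter]
    rw [hAe]
    refine (measurableSet_le measurable_const (hμm n)).inter
      (MeasurableSet.biInter (Finset.Ico N₁ n : Finset ℕ).countable_toSet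
        fun m _ => measurableSet_lt (hμm m) measurable_const)
  have hdisjkey : ∀ m n, N₁ ≤ m → m < n → Disjoint (A m) (A n) := by
    intro m n h1 h2
    rw [Set.disjoint_left]
    intro ω hωm hωn
    exact absurd hωm.1 (not_le.mpr (hωn.2 m (Finset.mem_Ico.mpr ⟨h1, h2⟩)))
  have hdisj : (↑(Finset.Icc N₁ N₂) : Set ℕ).PairwiseDisjoint A := by
    intro m hm n hn hmn
    simp only [Finset.coe_Icc, mem_Icc] at hm hn
    rcases lt_or_gt_of_ne hmn with h | h
    · exact hdisjkey m n hm.1 h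
    · exact (hdisjkey n m hn.1 h).symm
  have hUnion : {ω | ∃ n, N₁ ≤ n ∧ n ≤ N₂ ∧ x ≤ μhat n ω}
      = ⋃ n ∈ Finset.Icc N₁ N₂, A n := by
    ext ω
    simp only [mem_setOf_eq, mem_iUnion, Finset.mem_Icc, exists_prop, hA]
    constructor
    · rintro ⟨n, h1, h2, h3⟩
      have hex : ∃ k, N₁ ≤ k ∧ x ≤ μhat k ω := ⟨n, h1, h3⟩
      have hk := Nat.find_spec hex
      refine ⟨Nat.find hex, ⟨hk.1, le_trans (Nat.find_min' hex ⟨h1, h3⟩) h2⟩, hk.2, ?_⟩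
      intro m hm
      rw [Finset.mem_Ico] at hm
      by_contra hcon; push_neg at hcon
      exact absurd (Nat.find_min' hex ⟨hm.1, hcon⟩) (not_le.mpr hm.2)
    · rintro ⟨n, ⟨h1, h2⟩, h3, _⟩
      exact ⟨n, h1, h2, h3⟩
  ----------------------------------------------------------------
  -- PART 5 : pointwise lower bound on A n
  ----------------------------------------------------------------
  have hMlb : ∀ n ∈ Finset.Icc N₁ N₂, ∀ ω ∈ A n,
      exp ((N₁ : ℝ) * kl x μ) ≤ ∏ i ∈ Finset.range n, Y i ω := by
    intro n hn ω hω
    have hn1 : N₁ ≤ n := (Finset.mem_Icc.mp hn).1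
    have hnpos : (0:ℝ) < n := by
      have : 1 ≤ n := le_trans hN₁ hn1
      exact_mod_cast Nat.cast_pos.mpr (by omega)
    have hS : (n:ℝ) * x ≤ ∑ i ∈ Finset.range n, X i ω := by
      have h1 := hω.1
      rw [hμhat n ω, le_div_iff₀ hnpos] at h1
      linarith
    have hexp1 : exp ((N₁ : ℝ) * kl x μ) ≤ exp ((n : ℝ) * kl x μ) :=
      exp_le_exp.mpr (mul_le_mul_of_nonneg_right (Nat.cast_le.mpr hn1) hK0)
    have hexp2 : exp ((n : ℝ) * kl x μ)
        ≤ exp ((lam - θ) * (∑ i ∈ Finset.range n, X i ω) - n * (b lam - b θ)) := by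
      apply exp_le_exp.mpr
      rw [hKδ]
      nlinarith [mul_le_mul_of_nonneg_left hS hδ0]
    refine le_trans (le_trans hexp1 hexp2) (le_of_eq ?_)
    rw [← Real.exp_sum]
    congr 1
    rw [Finset.sum_sub_distrib, ← Finset.mul_sum, Finset.sum_const, Finset.card_range,
      nsmul_eq_mul]
  ----------------------------------------------------------------
  -- PART 6 : per-n inequality via independence
  ----------------------------------------------------------------
  have hkey : ∀ n ∈ Finset.Icc N₁ N₂,
      exp ((N₁ : ℝ) * kl x μ) * (P (A n)).toReal
        ≤ ∫ ω, (A n).indicator (fun ω => ∏ i ∈ Finset.range N₂, Y i ω) ω ∂P := by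
    intro n hn
    have hnN₂ : n ≤ N₂ := (Finset.mem_Icc.mp hn).2
    have hMnint := (hprod (Finset.range n)).1
    have hMnmeas : Measurable (fun ω => ∏ i ∈ Finset.range n, Y i ω) :=
      Finset.measurable_prod _ fun i _ => hYmeas i
    have hTmeas : Measurable (fun ω => ∏ i ∈ Finset.Ico n N₂, Y i ω) :=
      Finset.measurable_prod _ fun i _ => hYmeas i
    have hstep1 : exp ((N₁ : ℝ) * kl x μ) * (P (A n)).toReal
        ≤ ∫ ω in A n, (∏ i ∈ Finset.range n, Y i ω) ∂P :=
      by have := setIntegral_ge_of_const_le_real (hAmeas n) (measure_ne_top P _) (hMlb n hn)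
           hMnint.integrableOn
         rwa [measureReal_def] at this
    -- independence of indicator * M n and the tail product
    have hindep : ProbabilityTheory.IndepFun
        ((A n).indicator (fun ω => ∏ i ∈ Finset.range n, Y i ω))
        (fun ω => ∏ i ∈ Finset.Ico n N₂, Y i ω) P := by
      have hbase : ProbabilityTheory.IndepFun
          (fun ω (i : (Finset.range n : Finset ℕ)) => X i ω)
          (fun ω (i : (Finset.Ico n N₂ : Finset ℕ)) => X i ω) P :=
        hXindep.indepFun_finset (Finset.range n) (Finset.Ico n N₂)
          (by simp only [Finset.disjoint_left, Finset.mem_range, Finset.mem_Ico]; omega)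
          hXmeas
      set B : Set ((i : (Finset.range n : Finset ℕ)) → ℝ) :=
        {w | x ≤ (∑ i : (Finset.range n : Finset ℕ), w i) / n ∧
          ∀ m ∈ Finset.Ico N₁ n,
            (∑ i : (Finset.range n : Finset ℕ), if (i : ℕ) < m then w i else 0) / m < x}
        with hB
      set φ : ((i : (Finset.range n : Finset ℕ)) → ℝ) → ℝ :=
        B.indicator (fun w => ∏ i, f (w i)) with hφ
      set ψ : ((i : (Finset.Ico n N₂ : Finset ℕ)) → ℝ) → ℝ :=
        fun w => ∏ i, f (w i) with hψ
      have hBm : MeasurableSet B := by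
        rw [hB]
        have hBe : {w : (i : (Finset.range n : Finset ℕ)) → ℝ |
            x ≤ (∑ i : (Finset.range n : Finset ℕ), w i) / n ∧
            ∀ m ∈ Finset.Ico N₁ n,
              (∑ i : (Finset.range n : Finset ℕ), if (i : ℕ) < m then w i else 0) / m < x}
          = {w : (i : (Finset.range n : Finset ℕ)) → ℝ |
              x ≤ (∑ i : (Finset.range n : Finset ℕ), w i) / n} ∩
            ⋂ m ∈ Finset.Ico N₁ n,
              {w : (i : (Finset.range n : Finset ℕ)) → ℝ |
                (∑ i : (Finset.range n : Finset ℕ), if (i : ℕ) < m then w i else 0) / m < x} := by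
          ext w; simp [mem_iInter]
        rw [hBe]
        refine MeasurableSet.inter ?_ (MeasurableSet.biInter
          (Finset.Ico N₁ n : Finset ℕ).countable_toSet fun m _ => ?_)
        · exact measurableSet_le measurable_const
            ((Finset.measurable_sum _ fun i _ => measurable_pi_apply i).div_const _)
        · exact measurableSet_lt
            ((Finset.measurable_sum _ fun i _ => by
              exact Measurable.ite (by simp) (measurable_pi_apply i) measurable_const).div_const _)
            measurable_const
      have hφm : Measurable φ :=
        (Finset.measurable_prod _ fun i _ =>
          hfmeas.comp (measurable_pi_apply i)).indicator hBm
      have hψm : Measurable ψ :=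
        Finset.measurable_prod _ fun i _ => hfmeas.comp (measurable_pi_apply i)
      have hsum : ∀ ω, ∀ m ≤ n,
          (∑ i : (Finset.range n : Finset ℕ), if (i : ℕ) < m then X i ω else 0)
            = ∑ i ∈ Finset.range m, X i ω := by
        intro ω m hm
        rw [Finset.sum_coe_sort (Finset.range n) (fun i => if i < m then X i ω else 0)]
        rw [← Finset.sum_filter]
        congr 1
        ext k
        simp only [Finset.mem_filter, Finset.mem_range]
        omega
      have h1 : (A n).indicator (fun ω => ∏ i ∈ Finset.range n, Y i ω)
          = φ ∘ (fun ω (i : (Finset.range n : Finset ℕ)) => X i ω) := by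
        funext ω
        have hmem : (ω ∈ A n)
            ↔ (fun (i : (Finset.range n : Finset ℕ)) => X i ω) ∈ B := by
          rw [hB, hA]
          simp only [mem_setOf_eq]
          constructor
          · rintro ⟨hc1, hc2⟩
            constructor
            · rw [Finset.sum_coe_sort (Finset.range n) (fun i => X i ω)]
              rw [hμhat n ω] at hc1; exact hc1
            · intro m hm
              rw [hsum ω m (Finset.mem_Ico.mp hm).2.le]
              have := hc2 m hm
              rw [hμhat m ω] at this; exact this
          · rintro ⟨hc1, hc2⟩
            constructor
            · rw [hμhat n ω]
              rw [Finset.sum_coe_sort (Finset.range n) (fun i => X i ω)] at hc1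
              exact hc1
            · intro m hm
              have := hc2 m hm
              rw [hsum ω m (Finset.mem_Ico.mp hm).2.le] at this
              rw [hμhat m ω]; exact this
        have hval : (∏ i : (Finset.range n : Finset ℕ), f (X (i : ℕ) ω))
            = ∏ i ∈ Finset.range n, Y i ω :=
          Finset.prod_coe_sort (Finset.range n) (fun i => f (X i ω))
        by_cases h : ω ∈ A n
        · rw [Set.indicator_of_mem h]
          simp only [Function.comp_apply, hφ]
          rw [Set.indicator_of_mem (hmem.mp h)]
          exact hval.symm
        · rw [Set.indicator_of_notMem h]
          simp only [Function.comp_apply, hφ]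
          rw [Set.indicator_of_notMem (fun hh => h (hmem.mpr hh))]
      have h2 : (fun ω => ∏ i ∈ Finset.Ico n N₂, Y i ω)
          = ψ ∘ (fun ω (i : (Finset.Ico n N₂ : Finset ℕ)) => X i ω) := by
        funext ω
        simp only [Function.comp_apply, hψ]
        exact (Finset.prod_coe_sort (Finset.Ico n N₂) (fun i => f (X i ω))).symm
      rw [h1, h2]
      exact hbase.comp hφm hψm
    -- splitting the indicator of the full product
    have hsplit : (A n).indicator (fun ω => ∏ i ∈ Finset.range N₂, Y i ω)
        = ((A n).indicator (fun ω => ∏ i ∈ Finset.range n, Y i ω))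
            * (fun ω => ∏ i ∈ Finset.Ico n N₂, Y i ω) := by
      funext ω
      by_cases h : ω ∈ A n
      · rw [Pi.mul_apply, Set.indicator_of_mem h, Set.indicator_of_mem h,
          Finset.prod_range_mul_prod_Ico _ hnN₂]
      · rw [Pi.mul_apply, Set.indicator_of_notMem h, Set.indicator_of_notMem h,
          zero_mul]
    have hIndMn_nonneg : 0 ≤ (A n).indicator (fun ω => ∏ i ∈ Finset.range n, Y i ω) :=
      fun ω => Set.indicator_nonneg
        (fun ω _ => Finset.prod_nonneg fun i _ => (hYpos i ω).le) ω
    have hT_nonneg : (0:Ω → ℝ) ≤ (fun ω => ∏ i ∈ Finset.Ico n N₂, Y i ω) :=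
      fun ω => Finset.prod_nonneg fun i _ => (hYpos i ω).le
    calc exp ((N₁ : ℝ) * kl x μ) * (P (A n)).toReal
        ≤ ∫ ω in A n, (∏ i ∈ Finset.range n, Y i ω) ∂P := hstep1
      _ = ∫ ω, (A n).indicator (fun ω => ∏ i ∈ Finset.range n, Y i ω) ω ∂P :=
          (integral_indicator (hAmeas n)).symm
      _ = (∫ ω, (A n).indicator (fun ω => ∏ i ∈ Finset.range n, Y i ω) ω ∂P)
            * ∫ ω, (∏ i ∈ Finset.Ico n N₂, Y i ω) ∂P := by
          rw [(hprod (Finset.Ico n N₂)).2, mul_one]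
      _ = ∫ ω, ((A n).indicator (fun ω => ∏ i ∈ Finset.range n, Y i ω)
            * fun ω => ∏ i ∈ Finset.Ico n N₂, Y i ω) ω ∂P := by
          rw [hindep.integral_mul_eq_mul_integral
            (hMnmeas.indicator (hAmeas n)).aestronglyMeasurable hTmeas.aestronglyMeasurable]
      _ = ∫ ω, (A n).indicator (fun ω => ∏ i ∈ Finset.range N₂, Y i ω) ω ∂P := by
          rw [hsplit]
  ----------------------------------------------------------------
  -- PART 7 : summation and conclusion
  ----------------------------------------------------------------
  have hMN₂int := (hprod (Finset.range N₂)).1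
  have hindint : ∀ n ∈ Finset.Icc N₁ N₂,
      Integrable ((A n).indicator (fun ω => ∏ i ∈ Finset.range N₂, Y i ω)) P :=
    fun n _ => hMN₂int.indicator (hAmeas n)
  have hsum_le : ∑ n ∈ Finset.Icc N₁ N₂,
      ∫ ω, (A n).indicator (fun ω => ∏ i ∈ Finset.range N₂, Y i ω) ω ∂P ≤ 1 := by
    rw [← integral_finset_sum _ hindint]
    have hmono2 : ∫ ω, (∑ n ∈ Finset.Icc N₁ N₂,
        (A n).indicator (fun ω => ∏ i ∈ Finset.range N₂, Y i ω) ω) ∂P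
        ≤ ∫ ω, (∏ i ∈ Finset.range N₂, Y i ω) ∂P := by
      refine integral_mono (integrable_finset_sum _ hindint) hMN₂int ?_
      intro ω
      dsimp only
      by_cases hω : ∃ n₀ ∈ Finset.Icc N₁ N₂, ω ∈ A n₀
      · obtain ⟨n₀, hn₀, hmem⟩ := hω
        have hsum0 : ∑ n ∈ Finset.Icc N₁ N₂,
            (A n).indicator (fun ω => ∏ i ∈ Finset.range N₂, Y i ω) ω
            = ∏ i ∈ Finset.range N₂, Y i ω := by
          rw [Finset.sum_eq_single n₀]
          · exact Set.indicator_of_mem hmem _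
          · intro m hm hne
            refine Set.indicator_of_notMem ?_ _
            intro hmem'
            exact Set.disjoint_left.mp (hdisj (Finset.mem_coe.mpr hm)
              (Finset.mem_coe.mpr hn₀) hne) hmem' hmem
          · intro h; exact absurd hn₀ h
        exact le_of_eq hsum0
      · push_neg at hω
        have hsum0 : ∑ n ∈ Finset.Icc N₁ N₂,
            (A n).indicator (fun ω => ∏ i ∈ Finset.range N₂, Y i ω) ω = 0 :=
          Finset.sum_eq_zero fun m hm => Set.indicator_of_notMem (hω m hm) _
        rw [hsum0]
        exact Finset.prod_nonneg fun i _ => (hYpos i ω).le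
    calc _ ≤ ∫ ω, (∏ i ∈ Finset.range N₂, Y i ω) ∂P := hmono2
      _ = 1 := (hprod (Finset.range N₂)).2
  have hfinal : exp ((N₁ : ℝ) * kl x μ)
      * (P {ω | ∃ n, N₁ ≤ n ∧ n ≤ N₂ ∧ x ≤ μhat n ω}).toReal ≤ 1 := by
    rw [hUnion, measure_biUnion_finset hdisj (fun n _ => hAmeas n),
      ENNReal.toReal_sum (fun n _ => measure_ne_top P _), Finset.mul_sum]
    exact le_trans (Finset.sum_le_sum hkey) hsum_le
  rw [ENNReal.le_ofReal_iff_toReal_le (measure_ne_top P _) (exp_pos _).le]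
  have h3 : (P {ω | ∃ n, N₁ ≤ n ∧ n ≤ N₂ ∧ x ≤ μhat n ω}).toReal
      ≤ 1 / exp ((N₁ : ℝ) * kl x μ) := by
    rw [le_div_iff₀ (exp_pos _), mul_comm]
    exact hfinal
  calc (P {ω | ∃ n, N₁ ≤ n ∧ n ≤ N₂ ∧ x ≤ μhat n ω}).toReal
      ≤ 1 / exp ((N₁ : ℝ) * kl x μ) := h3
    _ = exp (-(N₁ : ℝ) * kl x μ) := by
        rw [show -(N₁ : ℝ) * kl x μ = -((N₁ : ℝ) * kl x μ) by ring, exp_neg, one_div]
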